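/- Under the assumptions of the KCUSUM and a post-change distribution p_1 with d_k(p_0,p_1)² > δ, where the increments g_δ(z_i) are i.i.d. with mean μ = d_k(p_0,p_1)² − δ > 0 and |g_δ(z)| ≤ 4‖k‖_∞, the expected first passage time c_1 = inf{n ≥ 1 : Σ_{i=1}^n g_δ(z_i) > h} satisfies E[c_1] ≤ h/(d_k(p_0,p_1)² − δ) + 4‖k‖_∞² / (d_k(p_0,p_1)² − δ)². -/

import Mathlib

open MeasureTheory ProbabilityTheory Real
open scoped ENNReal

/-- KCUSUM delay bound: with i.i.d. post-change increments `g_δ(z_i)` of mean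
`D - δ > 0` (where `D = d_k(p₀,p₁)²`), bounded by `|g_δ| ≤ 4‖k‖_∞` and with positive
part at most `2‖k‖_∞`, the first passage time `c₁` over `h` satisfies
`E[c₁] ≤ h/(D - δ) + 4‖k‖_∞²/(D - δ)²`. -/
theorem stmt15 {Ω : Type*} [MeasurableSpace Ω] (μ : Measure Ω) [IsProbabilityMeasure μ]
    (a : ℕ → Ω → ℝ) (hmeas : ∀ i, Measurable (a i))
    (hindep : iIndepFun a μ)
    (hident : ∀ i, IdentDistrib (a i) (a 0) μ μ)
    (K D δ : ℝ) (hK : 0 ≤ K) (hδ0 : 0 < δ) (hδK : δ < 2 * K) (hδD : δ < D)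
    (hbd : ∀ᵐ ω ∂μ, |a 0 ω| ≤ 4 * K)
    (hpos : ∀ᵐ ω ∂μ, a 0 ω ≤ 2 * K)
    (hint : Integrable (a 0) μ)
    (hmean : ∫ ω, a 0 ω ∂μ = D - δ)
    (h : ℝ) (hh : 0 ≤ h) :
    ∫⁻ ω, sInf {t : ℝ≥0∞ |
        ∃ n : ℕ, 1 ≤ n ∧ t = n ∧ h < ∑ i ∈ Finset.range n, a i ω} ∂μ
      ≤ ENNReal.ofReal (h / (D - δ) + 4 * K ^ 2 / (D - δ) ^ 2) := by
  classical
  have hm : 0 < D - δ := sub_pos.mpr hδD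
  set m : ℝ := D - δ with hm_def
  set S : ℕ → Ω → ℝ := fun n ω => ∑ i ∈ Finset.range n, a i ω with hS_def
  set B : ℕ → Set Ω := fun n => {ω | ∀ j ∈ Finset.Icc 1 n, S j ω ≤ h} with hB_def
  have hSmeas : ∀ n, Measurable (S n) := fun n => Finset.measurable_sum _ fun i _ => hmeas i
  have hBmeas : ∀ n, MeasurableSet (B n) := by
    intro n
    have e : B n = ⋂ j ∈ (Finset.Icc 1 n : Finset ℕ), {ω | S j ω ≤ h} := by
      ext ω; simp [hB_def]
    rw [e]
    exact MeasurableSet.biInter (Set.to_countable _)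
      fun j _ => measurableSet_le (hSmeas j) measurable_const
  have hBanti : ∀ {p q : ℕ}, p ≤ q → B q ⊆ B p := by
    intro p q hpq ω hω j hj
    exact hω j (Finset.mem_Icc.mpr
      ⟨(Finset.mem_Icc.mp hj).1, le_trans (Finset.mem_Icc.mp hj).2 hpq⟩)
  have hB0 : ∀ ω, ω ∈ B 0 := by
    intro ω j hj
    simp at hj
  -- pointwise identity between the first passage time and a sum of indicators
  have key : ∀ ω, sInf {t : ℝ≥0∞ |
        ∃ n : ℕ, 1 ≤ n ∧ t = n ∧ h < ∑ i ∈ Finset.range n, a i ω}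
      = ∑' n, Set.indicator (B n) (fun _ => (1:ℝ≥0∞)) ω := by
    intro ω
    by_cases hall : ∀ n, ω ∈ B n
    · have hT : {t : ℝ≥0∞ | ∃ n : ℕ, 1 ≤ n ∧ t = n ∧ h < ∑ i ∈ Finset.range n, a i ω}
          = ∅ := by
        ext t
        simp only [Set.mem_setOf_eq, Set.mem_empty_iff_false, iff_false, not_exists]
        rintro n ⟨hn1, rfl, hgt⟩
        exact absurd (hall n n (Finset.mem_Icc.mpr ⟨hn1, le_refl n⟩)) (not_le.mpr hgt)
      rw [hT, tsum_congr (fun n : ℕ => Set.indicator_of_mem (hall n) (fun _ => (1:ℝ≥0∞)))]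
      have e2 : ∑' (_ : ℕ), (1:ℝ≥0∞) = ⊤ := ENNReal.tsum_const_eq_top_of_ne_zero one_ne_zero
      rw [e2]
      exact sInf_empty
    · push_neg at hall
      set k := Nat.find hall with hk_def
      have hk : ω ∉ B k := Nat.find_spec hall
      have hlt : ∀ j, j < k → ω ∈ B j := fun j hj => not_not.mp (Nat.find_min hall hj)
      have hk1 : 1 ≤ k := by
        rcases Nat.eq_zero_or_pos k with h0 | h1
        · exact absurd (h0 ▸ hB0 ω) hk
        · exact h1
      have hmem : ∀ n, ω ∈ B n ↔ n < k := by
        intro n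
        constructor
        · intro hn
          by_contra hc
          exact hk (hBanti (not_lt.mp hc) hn)
        · exact hlt n
      have hSk : h < S k ω := by
        by_contra hc
        apply hk
        intro j hj
        rcases Finset.mem_Icc.mp hj with ⟨hj1, hjk⟩
        rcases lt_or_eq_of_le hjk with hjlt | rfl
        · exact hlt j hjlt j (Finset.mem_Icc.mpr ⟨hj1, le_refl j⟩)
        · exact not_lt.mp hc
      have hInf : sInf {t : ℝ≥0∞ |
          ∃ n : ℕ, 1 ≤ n ∧ t = n ∧ h < ∑ i ∈ Finset.range n, a i ω} = (k : ℝ≥0∞) := by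
        apply le_antisymm
        · exact sInf_le ⟨k, hk1, rfl, hSk⟩
        · apply le_sInf
          rintro t ⟨n, hn1, rfl, hgt⟩
          refine Nat.cast_le.mpr ?_
          by_contra hc
          exact absurd (hlt n (not_le.mp hc) n (Finset.mem_Icc.mpr ⟨hn1, le_refl n⟩))
            (not_le.mpr hgt)
      rw [hInf]
      have hind : ∀ n : ℕ, Set.indicator (B n) (fun _ => (1:ℝ≥0∞)) ω
          = if n < k then 1 else 0 := by
        intro n
        by_cases hn : n < k
        · rw [if_pos hn]; exact Set.indicator_of_mem ((hmem n).mpr hn) _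
        · rw [if_neg hn]; exact Set.indicator_of_notMem (fun hc => hn ((hmem n).mp hc)) _
      rw [tsum_congr hind,
        tsum_eq_sum (s := Finset.range k)
          (fun n hn => if_neg (fun hc => hn (Finset.mem_range.mpr hc))),
        Finset.sum_congr rfl (fun n hn => if_pos (Finset.mem_range.mp hn))]
      simp
  -- the lintegral equals the sum of measures of B n
  have hlint : ∫⁻ ω, sInf {t : ℝ≥0∞ |
        ∃ n : ℕ, 1 ≤ n ∧ t = n ∧ h < ∑ i ∈ Finset.range n, a i ω} ∂μ
      = ∑' n, μ (B n) := by
    rw [lintegral_congr key,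
      lintegral_tsum (fun n => (measurable_const.indicator (hBmeas n)).aemeasurable)]
    exact tsum_congr fun n => lintegral_indicator_one (hBmeas n)
  -- transfer hypotheses to each a i
  have hintN : ∀ i, Integrable (a i) μ := fun i => ((hident i).integrable_iff).mpr hint
  have hmeanN : ∀ i, ∫ ω, a i ω ∂μ = m := fun i => ((hident i).integral_eq).trans hmean
  have hposN : ∀ i, ∀ᵐ ω ∂μ, a i ω ≤ 2 * K := by
    intro i
    have hpre := (hident i).measure_mem_eq (s := Set.Ioi (2*K)) measurableSet_Ioi
    rw [ae_iff] at hpos ⊢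
    have e1 : {ω | ¬a i ω ≤ 2*K} = a i ⁻¹' Set.Ioi (2*K) := by ext ω; simp [not_le]
    have e2 : {ω | ¬a 0 ω ≤ 2*K} = a 0 ⁻¹' Set.Ioi (2*K) := by ext ω; simp [not_le]
    rw [e1, hpre, ← e2]
    exact hpos
  -- independence of a i from the indicator of B i
  have hindBi : ∀ i : ℕ, IndepFun (a i) (Set.indicator (B i) fun _ => (1:ℝ)) μ := by
    intro i
    have hdisj : Disjoint ({i} : Finset ℕ) (Finset.range i) := by
      simp [Finset.disjoint_left]
    have base := hindep.indepFun_finset {i} (Finset.range i) hdisj hmeas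
    have hCmeas : MeasurableSet {v : ↥(Finset.range i) → ℝ | ∀ j ∈ Finset.Icc 1 i,
        (∑ l ∈ (Finset.range i).attach, if (l : ℕ) < j then v l else 0) ≤ h} := by
      have e : {v : ↥(Finset.range i) → ℝ | ∀ j ∈ Finset.Icc 1 i,
          (∑ l ∈ (Finset.range i).attach, if (l : ℕ) < j then v l else 0) ≤ h}
          = ⋂ j ∈ (Finset.Icc 1 i : Finset ℕ), {v : ↥(Finset.range i) → ℝ |
            (∑ l ∈ (Finset.range i).attach, if (l : ℕ) < j then v l else 0) ≤ h} := by
        ext v; simp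
      rw [e]
      refine MeasurableSet.biInter (Set.to_countable _) fun j _ => ?_
      refine measurableSet_le (Finset.measurable_sum _ fun l _ => ?_) measurable_const
      by_cases hl : (l : ℕ) < j
      · simp only [if_pos hl]; exact measurable_pi_apply _
      · simp only [if_neg hl]; exact measurable_const
    have hg1 : Measurable (fun v : ↥({i} : Finset ℕ) → ℝ =>
        v ⟨i, Finset.mem_singleton_self i⟩) := measurable_pi_apply _
    have hg2 : Measurable (Set.indicator {v : ↥(Finset.range i) → ℝ | ∀ j ∈ Finset.Icc 1 i,
        (∑ l ∈ (Finset.range i).attach, if (l : ℕ) < j then v l else 0) ≤ h}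
        fun _ => (1:ℝ)) := measurable_const.indicator hCmeas
    have hcomp := base.comp hg1 hg2
    have e1 : (fun v : ↥({i} : Finset ℕ) → ℝ => v ⟨i, Finset.mem_singleton_self i⟩)
        ∘ (fun ω (j : ↥({i} : Finset ℕ)) => a j ω) = a i := rfl
    have e2 : (Set.indicator {v : ↥(Finset.range i) → ℝ | ∀ j ∈ Finset.Icc 1 i,
          (∑ l ∈ (Finset.range i).attach, if (l : ℕ) < j then v l else 0) ≤ h}
          fun _ => (1:ℝ))
        ∘ (fun ω (j : ↥(Finset.range i)) => a j ω)
        = Set.indicator (B i) fun _ => (1:ℝ) := by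
      funext ω
      have hCB : ((fun (j : ↥(Finset.range i)) => a j ω) ∈
          {v : ↥(Finset.range i) → ℝ | ∀ j ∈ Finset.Icc 1 i,
            (∑ l ∈ (Finset.range i).attach, if (l : ℕ) < j then v l else 0) ≤ h})
          ↔ ω ∈ B i := by
        simp only [Set.mem_setOf_eq, hB_def]
        refine forall₂_congr fun j hj => ?_
        have hji : j ≤ i := (Finset.mem_Icc.mp hj).2
        have hsum : (∑ l ∈ (Finset.range i).attach,
            if (l : ℕ) < j then a (l : ℕ) ω else 0) = ∑ l ∈ Finset.range j, a l ω := by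
          rw [Finset.sum_attach (Finset.range i) (fun l => if l < j then a l ω else 0),
            ← Finset.sum_subset (Finset.range_subset_range.mpr hji)
              (fun x _ hx => if_neg (fun hc => hx (Finset.mem_range.mpr hc)))]
          exact Finset.sum_congr rfl fun x hx => if_pos (Finset.mem_range.mp hx)
        rw [hsum]
      by_cases hω : ω ∈ B i
      · simp only [Function.comp_apply, Set.indicator_of_mem (hCB.mpr hω),
          Set.indicator_of_mem hω]
      · simp only [Function.comp_apply,
          Set.indicator_of_notMem (fun hc => hω (hCB.mp hc)),
          Set.indicator_of_notMem hω]
    rw [e1, e2] at hcomp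
    exact hcomp
  -- the key integral identity
  have hIi : ∀ i : ℕ, ∫ ω, Set.indicator (B i) (a i) ω ∂μ = m * (μ (B i)).toReal := by
    intro i
    have e : (fun ω => Set.indicator (B i) (a i) ω)
        = fun ω => a i ω * Set.indicator (B i) (fun _ => (1:ℝ)) ω := by
      funext ω
      by_cases hω : ω ∈ B i <;>
        simp [Set.indicator_of_mem, Set.indicator_of_notMem, hω]
    rw [e, (hindBi i).integral_fun_mul_eq_mul_integral (hintN i).aestronglyMeasurable
        (measurable_const.indicator (hBmeas i)).aestronglyMeasurable,
      hmeanN i]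
    congr 1
    rw [integral_indicator_const (1:ℝ) (hBmeas i)]
    simp [Measure.real]
  -- main bound on partial sums
  have hkey2 : ∀ N : ℕ, ∑ i ∈ Finset.range N, m * (μ (B i)).toReal ≤ h + 2*K := by
    intro N
    have hintInd : ∀ i, Integrable (Set.indicator (B i) (a i)) μ :=
      fun i => (hintN i).indicator (hBmeas i)
    have hsum_eq : ∑ i ∈ Finset.range N, m * (μ (B i)).toReal
        = ∫ ω, ∑ i ∈ Finset.range N, Set.indicator (B i) (a i) ω ∂μ := by
      rw [integral_finset_sum _ fun i _ => hintInd i]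
      exact Finset.sum_congr rfl fun i _ => (hIi i).symm
    rw [hsum_eq]
    have hb : ∀ᵐ ω ∂μ,
        (∑ i ∈ Finset.range N, Set.indicator (B i) (a i) ω) ≤ h + 2*K := by
      have hA : ∀ᵐ ω ∂μ, ∀ i, a i ω ≤ 2*K := (ae_all_iff).mpr hposN
      filter_upwards [hA] with ω hω
      obtain ⟨t, htN, htiff⟩ : ∃ t, t ≤ N ∧ ∀ n, n < N → (ω ∈ B n ↔ n < t) := by
        by_cases hex : ∃ n, n < N ∧ ω ∉ B n
        · refine ⟨Nat.find hex, le_of_lt (Nat.find_spec hex).1, fun n hn => ?_⟩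
          constructor
          · intro hmem'
            by_contra hc
            exact (Nat.find_spec hex).2 (hBanti (not_lt.mp hc) hmem')
          · intro hlt'
            have hmin := Nat.find_min hex hlt'
            push_neg at hmin
            exact hmin hn
        · push_neg at hex
          exact ⟨N, le_refl N, fun n hn => ⟨fun _ => hn, fun _ => hex n hn⟩⟩
      have hsum2 : (∑ i ∈ Finset.range N, Set.indicator (B i) (a i) ω) = S t ω := by
        have e : ∀ i ∈ Finset.range N,
            Set.indicator (B i) (a i) ω = if i < t then a i ω else 0 := by
          intro i hi
          by_cases hit : i < t
          · rw [if_pos hit,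
              Set.indicator_of_mem ((htiff i (Finset.mem_range.mp hi)).mpr hit)]
          · rw [if_neg hit,
              Set.indicator_of_notMem
                (fun hc => hit ((htiff i (Finset.mem_range.mp hi)).mp hc))]
        rw [Finset.sum_congr rfl e,
          ← Finset.sum_subset (Finset.range_subset_range.mpr htN)
            (fun x _ hx => if_neg fun hc => hx (Finset.mem_range.mpr hc))]
        exact Finset.sum_congr rfl fun x hx => if_pos (Finset.mem_range.mp hx)
      rw [hsum2]
      rcases Nat.eq_zero_or_pos t with rfl | ht
      · have : S 0 ω = 0 := by simp [hS_def]
        rw [this]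
        have : (0:ℝ) ≤ 2*K := by linarith
        linarith
      · obtain ⟨s, rfl⟩ : ∃ s, t = s + 1 := ⟨t - 1, by omega⟩
        have hSs : S s ω ≤ h := by
          rcases Nat.eq_zero_or_pos s with rfl | hs
          · have : S 0 ω = 0 := by simp [hS_def]
            rw [this]; exact hh
          · have hmem' : ω ∈ B s := (htiff s (by omega)).mpr (by omega)
            exact hmem' s (Finset.mem_Icc.mpr ⟨hs, le_refl s⟩)
        have hstep : S (s+1) ω = S s ω + a s ω := Finset.sum_range_succ _ _
        rw [hstep]
        have := hω s
        linarith
    calc ∫ ω, ∑ i ∈ Finset.range N, Set.indicator (B i) (a i) ω ∂μ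
        ≤ ∫ _ω, h + 2*K ∂μ :=
          integral_mono_ae (integrable_finset_sum _ fun i _ => hintInd i)
            (integrable_const _) hb
      _ = h + 2*K := by simp
  -- m ≤ 2K
  have hm2K : m ≤ 2*K := by
    have := integral_mono_ae hint (integrable_const (2*K)) hpos
    rwa [hmean, integral_const, probReal_univ, one_smul] at this
  -- real arithmetic
  have hdivle : (h + 2*K)/m ≤ h/m + 4*K^2/m^2 := by
    rw [add_div]
    have h2 : 2*K/m ≤ 4*K^2/m^2 := by
      rw [div_le_div_iff₀ hm (pow_pos hm 2)]
      nlinarith [mul_nonneg (mul_nonneg hK hm.le) (sub_nonneg.mpr hm2K)]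
    linarith
  rw [hlint]
  have hfinal : ∑' n, μ (B n) ≤ ENNReal.ofReal ((h + 2*K)/m) := by
    rw [ENNReal.tsum_eq_iSup_nat]
    refine iSup_le fun N => ?_
    have e : ∑ n ∈ Finset.range N, μ (B n)
        = ENNReal.ofReal (∑ n ∈ Finset.range N, (μ (B n)).toReal) := by
      rw [ENNReal.ofReal_sum_of_nonneg fun n _ => ENNReal.toReal_nonneg]
      exact Finset.sum_congr rfl fun n _ => (ENNReal.ofReal_toReal (measure_ne_top μ _)).symm
    rw [e]
    apply ENNReal.ofReal_le_ofReal
    have hk2 := hkey2 N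
    rw [← Finset.mul_sum] at hk2
    rw [le_div_iff₀ hm]
    linarith [hk2]
  exact le_trans hfinal (ENNReal.ofReal_le_ofReal hdivle)
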